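/- Let A ⊆ X with X ∖ N_k(A) ≠ ∅ for all k ∈ ℕ. Then the closed submodule M = closure of ⋃_k C*_u(N_k(A)) inside the Hilbert C*-module C*_u(X) (over itself) has trivial orthogonal complement (only S = 0 satisfies ⟨T,S⟩ = T*S = 0 for all T ∈ M) yet M ≠ C*_u(X); hence M is not orthogonally complemented in C*_u(X). -/

import Mathlib

noncomputable section

/-- `ℓ²(X)`. -/
abbrev H (X : Type) := lp (fun _ : X => ℂ) 2

/-- The delta function `δ_x`. -/
def delta {X : Type} (x : X) : H X :=
  letI := Classical.decEq X
  lp.single 2 x 1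

/-- Matrix entry `⟨δ_y, T δ_x⟩` of an operator. -/
def entry {X Y : Type} (T : H X →L[ℂ] H Y) (y : Y) (x : X) : ℂ := (T (delta x)) y

/-- `d` is a metric on `Z`. -/
structure IsMetric {Z : Type} (d : Z → Z → ℝ) : Prop where
  self : ∀ p, d p p = 0
  eq_of : ∀ p q, d p q = 0 → p = q
  symm : ∀ p q, d p q = d q p
  triangle : ∀ p q r, d p r ≤ d p q + d q r

/-- The cross part of the metric `d^A`:
`d^A(x₀, y₁) = inf_{z ∈ A} (d_X(x,z) + d_X(z,y) + 1)`. -/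
def crossA {X : Type} [MetricSpace X] (A : Set X) (x y : X) : ℝ :=
  ⨅ z : A, (dist x (z : X) + dist (z : X) y + 1)

/-- The metric `d^A` on the disjoint union `X₀ ⊔ X₁` of two copies of `X`. -/
def dA {X : Type} [MetricSpace X] (A : Set X) : X ⊕ X → X ⊕ X → ℝ
  | .inl x, .inl y => dist x y
  | .inr x, .inr y => dist x y
  | .inl x, .inr y => crossA A x y
  | .inr x, .inl y => crossA A y x

/-- The `k`-neighborhood `N_k(A) = {x : d_X(x, A) ≤ k}`. -/
def nbhd {X : Type} [MetricSpace X] (A : Set X) (k : ℝ) : Set X :=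
  {x : X | Metric.infDist x A ≤ k}

open scoped InnerProductSpace ENNReal Classical

section Aux

variable {X : Type}

lemma delta_apply (x y : X) :
    (delta x : H X) y = if y = x then 1 else 0 := by
  rw [delta]
  by_cases h : y = x
  · subst h; simp [lp.single_apply_self]
  · rw [lp.single_apply_ne 2 x _ h, if_neg h]

lemma delta_apply_self (x : X) : (delta x : H X) x = 1 := by
  simp [delta_apply]

lemma inner_delta_left (x : X) (f : H X) : ⟪delta x, f⟫_ℂ = f x := by
  rw [delta, lp.inner_single_left]
  simp [RCLike.inner_apply]

lemma norm_delta (x : X) : ‖(delta x : H X)‖ = 1 := by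
  rw [delta]
  have h := lp.norm_single (p := 2) (E := fun _ : X => ℂ)
    (by norm_num) x (1 : ℂ)
  simpa using h

/-- The rank-one projection onto `ℂ δ_x`. -/
def rankOne (x : X) : H X →L[ℂ] H X :=
  (innerSL ℂ (delta x)).smulRight (delta x)

lemma rankOne_apply (x : X) (v : H X) :
    rankOne x v = (v x) • delta x := by
  rw [rankOne, ContinuousLinearMap.smulRight_apply, innerSL_apply_apply, inner_delta_left]

lemma rankOne_selfAdjoint (x : X) :
    ContinuousLinearMap.adjoint (rankOne x) = rankOne x := by
  symm
  rw [ContinuousLinearMap.eq_adjoint_iff]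
  intro u v
  rw [rankOne_apply, rankOne_apply, inner_smul_left, inner_smul_right,
    inner_delta_left,
    show ⟪u, delta x⟫_ℂ = (starRingEnd ℂ) (u x) from by
      rw [← inner_conj_symm, inner_delta_left]]
  ring

lemma entry_rankOne (x y z : X) :
    entry (rankOne x) y z = (if x = z then 1 else 0) * (if y = x then 1 else 0) := by
  rw [entry, rankOne_apply, lp.coeFn_smul, Pi.smul_apply, delta_apply, delta_apply,
    smul_eq_mul]

end Aux

open ContinuousLinearMap in
/-- if `X ∖ N_k(A) ≠ ∅` for all `k`, then the closed submodule
`M = closure ⋃ₖ C*_u(N_k(A))` of the Hilbert C*-module `C*_u(X)` (over itself, with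
`⟨T,S⟩ = T*S`) has trivial orthogonal complement yet `M ≠ C*_u(X)`; hence `M` is not
orthogonally complemented in `C*_u(X)`. -/
theorem stmt_17 {X : Type} [MetricSpace X] (A : Set X) (hA : A.Nonempty)
    (hk : ∀ k : ℕ, ∃ x : X, x ∉ nbhd A k)
    (M Roe : Set (H X →L[ℂ] H X))
    (hM : M = closure (⋃ k : ℕ, {T : H X →L[ℂ] H X |
        (∃ L : ℝ, ∀ x y : X, L ≤ dist x y → entry T x y = 0) ∧
        (∀ x y : X, entry T x y ≠ 0 → x ∈ nbhd A k ∧ y ∈ nbhd A k)}))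
    (hRoe : Roe = closure {T : H X →L[ℂ] H X |
        ∃ L : ℝ, ∀ x y : X, L ≤ dist x y → entry T x y = 0}) :
    (∀ S ∈ Roe, (∀ T ∈ M, (adjoint T).comp S = 0) → S = 0) ∧ M ≠ Roe := by
  classical
  have hmemM : ∀ x : X, rankOne x ∈ M := by
    intro x
    rw [hM]
    apply subset_closure
    apply Set.mem_iUnion.2
    refine ⟨⌈Metric.infDist x A⌉₊, ?_, ?_⟩
    · refine ⟨1, fun y z hyz => ?_⟩
      have hne : y ≠ z := by
        intro h; subst h; rw [dist_self] at hyz; linarith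
      rw [entry_rankOne]
      by_cases hz : x = z
      · rw [if_neg (fun h : y = x => hne (h.trans hz)), mul_zero]
      · rw [if_neg hz, zero_mul]
    · intro y z hyz
      rw [entry_rankOne] at hyz
      have hy : y = x := by
        by_contra h; rw [if_neg h, mul_zero] at hyz; exact hyz rfl
      have hz : x = z := by
        by_contra h; rw [if_neg h, zero_mul] at hyz; exact hyz rfl
      have hmem : Metric.infDist x A ≤ (⌈Metric.infDist x A⌉₊ : ℝ) := Nat.le_ceil _
      refine ⟨?_, ?_⟩
      · rw [nbhd, Set.mem_setOf_eq, hy]; exact hmem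
      · rw [nbhd, Set.mem_setOf_eq, ← hz]; exact hmem
  constructor
  · intro S _ hS
    ext v y
    have h := hS (rankOne y) (hmemM y)
    rw [rankOne_selfAdjoint] at h
    have h2 : rankOne y (S v) = 0 := by
      have := congrArg (fun T => T v) h
      simpa using this
    rw [rankOne_apply] at h2
    have hd : (delta y : H X) ≠ 0 := by
      intro h0
      have := norm_delta y
      rw [h0, norm_zero] at this
      norm_num at this
    have : (S v) y = 0 := by
      rcases smul_eq_zero.1 h2 with h' | h'
      · exact h'
      · exact absurd h' hd
    simpa using this
  · intro hEq
    -- `1 ∈ Roe` but `1 ∉ M`.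
    have h1Roe : (1 : H X →L[ℂ] H X) ∈ Roe := by
      rw [hRoe]
      apply subset_closure
      refine ⟨1, fun x y hxy => ?_⟩
      have hne : x ≠ y := by
        intro h; subst h; rw [dist_self] at hxy; linarith
      rw [entry]
      simpa [delta_apply] using fun h : x = y => absurd h hne
    have h1M : (1 : H X →L[ℂ] H X) ∉ M := by
      rw [hM]
      intro hmem
      rw [Metric.mem_closure_iff] at hmem
      obtain ⟨T, hT, hdist⟩ := hmem 1 one_pos
      obtain ⟨k, hTk⟩ := Set.mem_iUnion.1 hT
      obtain ⟨x, hx⟩ := hk k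
      have hexx : entry T x x = 0 := by
        by_contra h
        exact hx (hTk.2 x x h).1
      have key : (1 : ℝ) ≤ dist (1 : H X →L[ℂ] H X) T := by
        have h1 : (((1 : H X →L[ℂ] H X) - T) (delta x)) x = 1 := by
          simp only [ContinuousLinearMap.sub_apply, ContinuousLinearMap.one_apply]
          rw [lp.coeFn_sub, Pi.sub_apply]
          rw [show (T (delta x)) x = entry T x x from rfl, hexx, delta_apply_self, sub_zero]
        have h2 : (1 : ℝ) ≤ ‖((1 : H X →L[ℂ] H X) - T) (delta x)‖ := by
          have := lp.norm_apply_le_norm (E := fun _ : X => ℂ) (p := 2) (by norm_num)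
            (((1 : H X →L[ℂ] H X) - T) (delta x)) x
          rw [h1] at this
          simpa using this
        have h3 : ‖((1 : H X →L[ℂ] H X) - T) (delta x)‖ ≤ ‖(1 : H X →L[ℂ] H X) - T‖ := by
          have := ContinuousLinearMap.le_opNorm ((1 : H X →L[ℂ] H X) - T) (delta x)
          rwa [norm_delta, mul_one] at this
        rw [dist_eq_norm]
        linarith
      linarith
    exact h1M (hEq ▸ h1Roe)
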